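/- Let V be a finitely generated free abelian group (a finitely generated free ℤ-module) equipped with an endomorphism ∂ : V → V satisfying ∂ ∘ ∂ = 0. Let z ∈ V be an element with ∂ z = 0 such that for every nonzero integer a the element a·z does not lie in the image of ∂ (i.e., the induced map ℤ → ker ∂ / im ∂, a ↦ a·[z], is injective). Let w : V → ℤ be a ℤ-linear map with w ∘ ∂ = 0 and w(z) = 0, and suppose there exists v ∈ V with ∂ v = 0 and w(v) = 1 (i.e., the induced map ker ∂ / im ∂ → ℤ is surjective). Define the total complex T = ℤ × V × ℤ with differential D(a, v, b) = (0, a·z + ∂ v, w(v)); then D ∘ D = 0, and the rank of the homology of (T, D) satisfies: rank(ker D) − rank(range D) = (rank(ker ∂) − rank(range ∂)) − 2. -/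
import Mathlib

open Module LinearMap

/-- Rank-nullity (finrank form) over a ring with the rank-nullity property. -/
private lemma rn_gen {R : Type} [Ring R] [StrongRankCondition R]
    {M : Type v} {N : Type w} [HasRankNullity.{v} R]
    [AddCommGroup M] [Module R M] [Module.Finite R M]
    [AddCommGroup N] [Module R N] (f : M →ₗ[R] N) :
    finrank R (LinearMap.range f) + finrank R (LinearMap.ker f) = finrank R M := by
  rw [← LinearEquiv.finrank_eq f.quotKerEquivRange]
  exact Submodule.finrank_quotient_add_finrank _

private lemma supinf_gen {R : Type} [Ring R] [StrongRankCondition R]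
    {M : Type v} [HasRankNullity.{v} R]
    [AddCommGroup M] [Module R M] [Module.Finite R M]
    (s t : Submodule R M) :
    finrank R ↥(s ⊔ t) + finrank R ↥(s ⊓ t) = finrank R s + finrank R t := by
  have h := Submodule.rank_sup_add_rank_inf_eq s t
  rw [← Submodule.finrank_eq_rank, ← Submodule.finrank_eq_rank, ← Submodule.finrank_eq_rank,
    ← Submodule.finrank_eq_rank] at h
  exact_mod_cast h

/-- Lemma 3.2 (algebraic content, integral version): given a finitely generated free
abelian group `V` with a differential `d` (`d ∘ d = 0`), a cycle `z` whose homology class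
generates a `ℤ`-summand injectively (no nonzero multiple of `z` is a boundary), and a
linear functional `w` vanishing on boundaries and on `z` which is surjective on homology
(there is a cycle `v` with `w v = 1`), the total complex `T = ℤ × V × ℤ` with differential
`D (a, v, b) = (0, a • z + d v, w v)` satisfies `D ∘ D = 0` and the rank of its homology is
the rank of the homology of `(V, d)` minus `2`. -/
theorem stmt0 (V : Type*) [AddCommGroup V] [Module ℤ V]
    [Module.Free ℤ V] [Module.Finite ℤ V]
    (d : V →ₗ[ℤ] V) (hdd : d ∘ₗ d = 0)
    (z : V) (hz : d z = 0)
    (hzinj : ∀ a : ℤ, a ≠ 0 → a • z ∉ LinearMap.range d)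
    (w : V →ₗ[ℤ] ℤ) (hwd : w ∘ₗ d = 0) (hwz : w z = 0)
    (hsurj : ∃ v : V, d v = 0 ∧ w v = 1)
    (D : ℤ × V × ℤ →ₗ[ℤ] ℤ × V × ℤ)
    (hD : ∀ (a : ℤ) (v : V) (b : ℤ), D (a, v, b) = (0, a • z + d v, w v)) :
    D ∘ₗ D = 0 ∧
    (Module.finrank ℤ (LinearMap.ker D) : ℤ) - Module.finrank ℤ (LinearMap.range D)
      = ((Module.finrank ℤ (LinearMap.ker d) : ℤ)
          - Module.finrank ℤ (LinearMap.range d)) - 2 := by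
  have hEq : ‹Module ℤ V› = AddCommGroup.toIntModule V :=
    AddCommGroup.uniqueIntModule.uniq _
  subst hEq
  obtain ⟨v₀, hdv₀, hwv₀⟩ := hsurj
  have hd2 : ∀ x, d (d x) = 0 := fun x => congrFun (congrArg DFunLike.coe hdd) x
  have hwd' : ∀ x, w (d x) = 0 := fun x => congrFun (congrArg DFunLike.coe hwd) x
  constructor
  · apply LinearMap.ext
    rintro ⟨a, v, b⟩
    rw [LinearMap.comp_apply, hD, hD]
    simp [map_add, map_zsmul, hz, hd2 v, hwz, hwd' v, Prod.ext_iff]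
  -- rank part
  have hz0 : z ≠ 0 := by
    intro h
    exact hzinj 1 one_ne_zero (by rw [h, smul_zero]; exact zero_mem _)
  -- span of z has rank 1
  have hspanz : finrank ℤ ↥(Submodule.span ℤ ({z} : Set V)) = 1 := by
    have hinj : Function.Injective (LinearMap.toSpanSingleton ℤ V z) := by
      intro a b hab
      exact smul_left_injective ℤ hz0 hab
    have e : finrank ℤ ℤ =
        finrank ℤ ↥(LinearMap.range (LinearMap.toSpanSingleton ℤ V z)) :=
      LinearEquiv.finrank_eq (LinearEquiv.ofInjective _ hinj)
    rw [LinearMap.span_singleton_eq_range, ← e, finrank_self]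
  -- the intersection is trivial
  have hinf : Submodule.span ℤ ({z} : Set V) ⊓ LinearMap.range d = ⊥ := by
    rw [eq_bot_iff]
    rintro x ⟨hx1, hx2⟩
    obtain ⟨a, rfl⟩ := Submodule.mem_span_singleton.mp hx1
    rcases eq_or_ne a 0 with rfl | ha
    · simp
    · exact absurd hx2 (hzinj a ha)
  set Mz : Submodule ℤ V := Submodule.span ℤ ({z} : Set V) ⊔ LinearMap.range d with hMzdef
  have hMz : finrank ℤ ↥Mz = finrank ℤ (LinearMap.range d) + 1 := by
    have h := supinf_gen (Submodule.span ℤ ({z} : Set V)) (LinearMap.range d)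
    rw [hinf, hspanz, finrank_bot] at h
    rw [hMzdef]
    omega
  -- the projection to the last coordinate, restricted to range D
  set p : ℤ × V × ℤ →ₗ[ℤ] ℤ :=
    { toFun := fun x => x.2.2, map_add' := fun _ _ => rfl, map_smul' := fun _ _ => rfl } with hp
  set f : ↥(LinearMap.range D) →ₗ[ℤ] ℤ := p.comp (LinearMap.range D).subtype with hf
  have hfsurj : Function.Surjective f := by
    intro c
    refine ⟨⟨D (0, c • v₀, 0), ⟨(0, c • v₀, 0), rfl⟩⟩, ?_⟩
    show (D (0, c • v₀, 0)).2.2 = c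
    rw [hD]
    simp [map_zsmul, hwv₀]
  -- middle-coordinate map on ker f
  set m : ℤ × V × ℤ →ₗ[ℤ] V :=
    { toFun := fun x => x.2.1, map_add' := fun _ _ => rfl, map_smul' := fun _ _ => rfl } with hm
  set g : ↥(LinearMap.ker f) →ₗ[ℤ] V :=
    m.comp ((LinearMap.range D).subtype.comp (LinearMap.ker f).subtype) with hg
  have hfirst : ∀ y : ℤ × V × ℤ, y ∈ LinearMap.range D → y.1 = 0 := by
    rintro y ⟨⟨a, v, b⟩, rfl⟩
    rw [hD]
  have hginj : Function.Injective g := by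
    rintro ⟨⟨x, hx⟩, hx0⟩ ⟨⟨y, hy⟩, hy0⟩ hxy
    have hx1 : x.1 = 0 := hfirst x hx
    have hy1 : y.1 = 0 := hfirst y hy
    have hx3 : x.2.2 = 0 := by
      have := hx0
      rwa [LinearMap.mem_ker] at this
    have hy3 : y.2.2 = 0 := by
      have := hy0
      rwa [LinearMap.mem_ker] at this
    have hmid : x.2.1 = y.2.1 := hxy
    apply Subtype.ext
    apply Subtype.ext
    refine Prod.ext ?_ (Prod.ext ?_ ?_)
    · rw [hx1, hy1]
    · exact hmid
    · rw [hx3, hy3]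
  have hgrange : LinearMap.range g = Mz := by
    apply le_antisymm
    · rintro _ ⟨⟨⟨x, hx⟩, hx0⟩, rfl⟩
      obtain ⟨⟨a, v, b⟩, rfl⟩ := hx
      have hval : g ⟨⟨D (a, v, b), ⟨(a, v, b), rfl⟩⟩, hx0⟩ = a • z + d v := by
        show (D (a, v, b)).2.1 = a • z + d v
        rw [hD]
      rw [hval]
      refine Submodule.add_mem _ ?_ (Submodule.mem_sup_right ⟨v, rfl⟩)
      exact Submodule.mem_sup_left (zsmul_mem (Submodule.mem_span_singleton_self z) a)
    · rw [hMzdef]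
      apply sup_le
      · rw [Submodule.span_le, Set.singleton_subset_iff]
        have hy : ((0, z, 0) : ℤ × V × ℤ) ∈ LinearMap.range D := by
          refine ⟨(1, 0, 0), ?_⟩
          rw [hD]
          simp
        have hy0 : (⟨(0, z, 0), hy⟩ : ↥(LinearMap.range D)) ∈ LinearMap.ker f := by
          rw [LinearMap.mem_ker]
          rfl
        exact ⟨⟨⟨(0, z, 0), hy⟩, hy0⟩, rfl⟩
      · rintro _ ⟨v, rfl⟩
        have hy : ((0, d v, 0) : ℤ × V × ℤ) ∈ LinearMap.range D := by
          refine ⟨(0, v - w v • v₀, 0), ?_⟩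
          rw [hD]
          simp [map_sub, map_zsmul, hdv₀, hwv₀, mul_comm]
        have hy0 : (⟨(0, d v, 0), hy⟩ : ↥(LinearMap.range D)) ∈ LinearMap.ker f := by
          rw [LinearMap.mem_ker]
          rfl
        exact ⟨⟨⟨(0, d v, 0), hy⟩, hy0⟩, rfl⟩
  -- finrank of range D
  have hRD : finrank ℤ ↥(LinearMap.range D) = finrank ℤ (LinearMap.range d) + 2 := by
    have h1 := rn_gen f
    have h2 : finrank ℤ ↥(LinearMap.range f) = 1 := by
      rw [LinearMap.range_eq_top.mpr hfsurj, finrank_top, finrank_self]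
    have h3 : finrank ℤ ↥(LinearMap.ker f) = finrank ℤ ↥Mz := by
      rw [LinearEquiv.finrank_eq (LinearEquiv.ofInjective g hginj), hgrange]
    rw [h2, h3, hMz] at h1
    omega
  have hN1 := rn_gen D
  have hN2 := rn_gen d
  have htot : finrank ℤ (ℤ × V × ℤ) = finrank ℤ V + 2 := by
    rw [Module.finrank_prod, Module.finrank_prod, finrank_self]
    omega
  rw [htot, hRD] at hN1
  have hk : (finrank ℤ (LinearMap.ker D) : ℤ) = (finrank ℤ (LinearMap.ker d) : ℤ) := by
    omega
  rw [hk, hRD]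
  push_cast
  omega
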